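/- With λ₃ = 0, the one-loop beta functions β₁ = −ελ₁ + (13λ₁²)/(48π²) + (λ₁λ₂)/(8π²) and β₂ = −ελ₂ + (3λ₂²)/(16π²) + (λ₁λ₂)/(4π²) vanish simultaneously for real λ₁, λ₂ exactly at (0,0), (48π²ε/13, 0), (0, 16π²ε/3), and (16π²ε/5, 16π²ε/15). -/

import Mathlib

open Real

/-- With `λ₃ = 0`, the one-loop beta functions of the Cubic(5) Landau theory vanish
simultaneously exactly at `(0,0)`, `(48π²ε/13,0)`, `(0,16π²ε/3)`, `(16π²ε/5,16π²ε/15)`. -/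
theorem stmt_10 (ε : ℝ) (hε : ε > 0) (l₁ l₂ : ℝ) :
    (-ε * l₁ + 13 * l₁ ^ 2 / (48 * π ^ 2) + l₁ * l₂ / (8 * π ^ 2) = 0 ∧
     -ε * l₂ + 3 * l₂ ^ 2 / (16 * π ^ 2) + l₁ * l₂ / (4 * π ^ 2) = 0) ↔
    ((l₁, l₂) = (0, 0) ∨
     (l₁, l₂) = (48 * π ^ 2 * ε / 13, 0) ∨
     (l₁, l₂) = (0, 16 * π ^ 2 * ε / 3) ∨
     (l₁, l₂) = (16 * π ^ 2 * ε / 5, 16 * π ^ 2 * ε / 15)) := by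
  have hπ : (π : ℝ) ≠ 0 := Real.pi_ne_zero
  have hπ2 : (π : ℝ) ^ 2 ≠ 0 := pow_ne_zero 2 hπ
  constructor
  · rintro ⟨h1, h2⟩
    have e1 : l₁ * (13 * l₁ + 6 * l₂ - 48 * π ^ 2 * ε) = 0 := by
      field_simp at h1
      have h8 : (8 : ℝ) * π ^ 2 ≠ 0 := by positivity
      have : (8 * π ^ 2) * (l₁ * (13 * l₁ + 6 * l₂ - 48 * π ^ 2 * ε)) = 0 := by
        linear_combination π ^ 2 * h1
      exact (mul_eq_zero.1 this).resolve_left h8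
    have e2 : l₂ * (3 * l₂ + 4 * l₁ - 16 * π ^ 2 * ε) = 0 := by
      field_simp at h2
      have h4 : (4 : ℝ) * π ^ 2 ≠ 0 := by positivity
      have : (4 * π ^ 2) * (l₂ * (3 * l₂ + 4 * l₁ - 16 * π ^ 2 * ε)) = 0 := by
        linear_combination π ^ 2 * h2
      exact (mul_eq_zero.1 this).resolve_left h4
    rcases mul_eq_zero.1 e1 with ha | ha <;> rcases mul_eq_zero.1 e2 with hb | hb
    · left; simp [ha, hb]
    · right; right; left
      have : l₂ = 16 * π ^ 2 * ε / 3 := by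
        field_simp; linarith [hb, ha]
      simp [ha, this]
    · right; left
      have : l₁ = 48 * π ^ 2 * ε / 13 := by
        field_simp; linarith [ha, hb]
      simp [hb, this]
    · right; right; right
      have h1' : l₁ = 16 * π ^ 2 * ε / 5 := by field_simp; linarith
      have h2' : l₂ = 16 * π ^ 2 * ε / 15 := by field_simp; linarith
      simp [h1', h2']
  · rintro (h | h | h | h) <;> rw [Prod.mk.injEq] at h <;>
      obtain ⟨rfl, rfl⟩ := h <;> constructor <;> field_simp <;> ring
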